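/- Under conditions (C1), (C2), (C3) as in the noncommutative Kepler setting, the components of the angular momentum L' = q'×p' satisfy, at every phase-space point where the conditions hold, the so(3) commutation relations {L'_i, L'_j}_nc = Σ_{h=1}^3 ε_{ijh} F'_{hh} L'_h for all i,j ∈ {1,2,3}, where ε_{ijh} is the Levi-Civita symbol and F'_{hh} = −F_{hh}. -/

import Mathlib

open scoped BigOperators

/-- Phase space ℝ⁶ = {(q, p)} with q, p : Fin 3 → ℝ. -/
abbrev PhaseSpace := (Fin 3 → ℝ) × (Fin 3 → ℝ)

/-- Partial derivative of `f` with respect to the position coordinate `q_ν`. -/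
noncomputable def pdQ (f : PhaseSpace → ℝ) (ν : Fin 3) (z : PhaseSpace) : ℝ :=
  fderiv ℝ f z (Pi.single ν 1, 0)

/-- Partial derivative of `f` with respect to the momentum coordinate `p_ν`. -/
noncomputable def pdP (f : PhaseSpace → ℝ) (ν : Fin 3) (z : PhaseSpace) : ℝ :=
  fderiv ℝ f z (0, Pi.single ν 1)

/-- Noncommutative Poisson bracket
`{f,g}_nc = Σ_ν θ_ν⁻¹ (∂f/∂p_ν ∂g/∂q_ν − ∂f/∂q_ν ∂g/∂p_ν)`. -/
noncomputable def ncBracket (θ : Fin 3 → ℝ) (f g : PhaseSpace → ℝ) (z : PhaseSpace) : ℝ :=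
  ∑ ν : Fin 3, (θ ν)⁻¹ * (pdP f ν z * pdQ g ν z - pdQ f ν z * pdP g ν z)

/-- Transformed position coordinate `q'_i = q_i − (1/2) Σ_j α_{ij} p_j`. -/
noncomputable def qNC (α : Matrix (Fin 3) (Fin 3) ℝ) (i : Fin 3) (z : PhaseSpace) : ℝ :=
  z.1 i - (1/2) * ∑ j : Fin 3, α i j * z.2 j

/-- Transformed momentum coordinate `p'_i = p_i + (1/2) Σ_j λ_{ij} q_j`. -/
noncomputable def pNC (lam : Matrix (Fin 3) (Fin 3) ℝ) (i : Fin 3) (z : PhaseSpace) : ℝ :=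
  z.2 i + (1/2) * ∑ j : Fin 3, lam i j * z.1 j

/-- `θ_ν = 1 + (1/4) Σ_μ λ_{μν} α_{μν}`. -/
noncomputable def θnc (α lam : Matrix (Fin 3) (Fin 3) ℝ) (ν : Fin 3) : ℝ :=
  1 + (1/4) * ∑ μ : Fin 3, lam μ ν * α μ ν

/-- `F_{ii} = θ_i⁻¹ + (1/4) Σ_j λ_{ij} α_{ij} θ_j⁻¹` and
`F_{ij} = (1/4) Σ_r λ_{ir} α_{jr} θ_r⁻¹` for `i ≠ j`. -/
noncomputable def Fnc (α lam : Matrix (Fin 3) (Fin 3) ℝ) (i j : Fin 3) : ℝ :=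
  if i = j then (θnc α lam i)⁻¹ + (1/4) * ∑ r : Fin 3, lam i r * α i r * (θnc α lam r)⁻¹
  else (1/4) * ∑ r : Fin 3, lam i r * α j r * (θnc α lam r)⁻¹

/-- Levi-Civita symbol `ε_{ijh} = (1/2)(i−j)(j−h)(h−i)`. -/
noncomputable def eps (i j h : Fin 3) : ℝ :=
  (1/2) * ((i.1 : ℝ) - (j.1 : ℝ)) * ((j.1 : ℝ) - (h.1 : ℝ)) * ((h.1 : ℝ) - (i.1 : ℝ))

/-- Angular momentum `L' = q' × p'`, componentwise `L'_i = Σ_{j,h} ε_{ijh} q'_j p'_h`. -/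
noncomputable def Lnc (α lam : Matrix (Fin 3) (Fin 3) ℝ) (i : Fin 3) (z : PhaseSpace) : ℝ :=
  ∑ j : Fin 3, ∑ h : Fin 3, eps i j h * qNC α j z * pNC lam h z

/-- `Y = (Σ_i (q'_i)²)^{1/2}`, the Euclidean norm of `q'`. -/
noncomputable def Ync (α : Matrix (Fin 3) (Fin 3) ℝ) (z : PhaseSpace) : ℝ :=
  Real.sqrt (∑ i : Fin 3, (qNC α i z) ^ 2)

/-- Noncommutative Kepler Hamiltonian `H' = (1/(2m)) Σ_i (p'_i)² − k/Y`. -/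
noncomputable def Hnc (α lam : Matrix (Fin 3) (Fin 3) ℝ) (m k : ℝ) (z : PhaseSpace) : ℝ :=
  (1 / (2 * m)) * ∑ i : Fin 3, (pNC lam i z) ^ 2 - k / Ync α z

/-- Laplace–Runge–Lenz vector `A' = p' × L' − mk q'/Y`. -/
noncomputable def Anc (α lam : Matrix (Fin 3) (Fin 3) ℝ) (m k : ℝ) (i : Fin 3)
    (z : PhaseSpace) : ℝ :=
  (∑ j : Fin 3, ∑ h : Fin 3, eps i j h * pNC lam j z * Lnc α lam h z)
    - m * k * qNC α i z / Ync α z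

/-- Condition (C1): `λ_{ij} θ_i = λ_{ji} θ_j` and `α_{ij} θ_i = α_{ji} θ_j` for all `i, j`. -/
def CondC1 (α lam : Matrix (Fin 3) (Fin 3) ℝ) : Prop :=
  ∀ i j : Fin 3, lam i j * θnc α lam i = lam j i * θnc α lam j ∧
    α i j * θnc α lam i = α j i * θnc α lam j

/-- Condition (C2), holding at the point `z`: for all `i, j, κ`,
`q'_i λ_{κj} θ_i = q'_j λ_{κi} θ_j`, `q'_i α_{κi} θ_j = −q'_j α_{κj} θ_i`,
`p'_i α_{κj} θ_i = p'_j α_{κi} θ_j`, `p'_i λ_{κi} θ_j = −p'_j λ_{κj} θ_i`. -/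
def CondC2 (α lam : Matrix (Fin 3) (Fin 3) ℝ) (z : PhaseSpace) : Prop :=
  ∀ i j κ : Fin 3,
    qNC α i z * lam κ j * θnc α lam i = qNC α j z * lam κ i * θnc α lam j ∧
    qNC α i z * α κ i * θnc α lam j = -(qNC α j z * α κ j * θnc α lam i) ∧
    pNC lam i z * α κ j * θnc α lam i = pNC lam j z * α κ i * θnc α lam j ∧
    pNC lam i z * lam κ i * θnc α lam j = -(pNC lam j z * lam κ j * θnc α lam i)

/-- Condition (C3): the matrix `F` is symmetric with `F_{11} = F_{22} = F_{33}`. -/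
def CondC3 (α lam : Matrix (Fin 3) (Fin 3) ℝ) : Prop :=
  (∀ i j : Fin 3, Fnc α lam i j = Fnc α lam j i) ∧
    Fnc α lam 0 0 = Fnc α lam 1 1 ∧ Fnc α lam 1 1 = Fnc α lam 2 2

/-- Scaled Runge–Lenz–Pauli vector on negative energies: `Γ̂'⁻ = A'/(−2mH')^{1/2}`. -/
noncomputable def GamMinus (α lam : Matrix (Fin 3) (Fin 3) ℝ) (m k : ℝ) (i : Fin 3)
    (z : PhaseSpace) : ℝ :=
  Anc α lam m k i z / Real.sqrt (-(2 * m * Hnc α lam m k z))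

/-- Scaled Runge–Lenz–Pauli vector on positive energies: `Γ̂'⁺ = A'/(2mH')^{1/2}`. -/
noncomputable def GamPlus (α lam : Matrix (Fin 3) (Fin 3) ℝ) (m k : ℝ) (i : Fin 3)
    (z : PhaseSpace) : ℝ :=
  Anc α lam m k i z / Real.sqrt (2 * m * Hnc α lam m k z)

-- auxiliary derivative machinery
noncomputable def cQ (a : Fin 3) : PhaseSpace →L[ℝ] ℝ :=
  (ContinuousLinearMap.proj a).comp (ContinuousLinearMap.fst ℝ (Fin 3 → ℝ) (Fin 3 → ℝ))
noncomputable def cP (a : Fin 3) : PhaseSpace →L[ℝ] ℝ :=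
  (ContinuousLinearMap.proj a).comp (ContinuousLinearMap.snd ℝ (Fin 3 → ℝ) (Fin 3 → ℝ))

noncomputable def dq (α : Matrix (Fin 3) (Fin 3) ℝ) (a : Fin 3) : PhaseSpace →L[ℝ] ℝ :=
  cQ a - ∑ j : Fin 3, ((1/2) * α a j) • cP j
noncomputable def dp (lam : Matrix (Fin 3) (Fin 3) ℝ) (a : Fin 3) : PhaseSpace →L[ℝ] ℝ :=
  cP a + ∑ j : Fin 3, ((1/2) * lam a j) • cQ j

lemma hasFDerivAt_qNC (α : Matrix (Fin 3) (Fin 3) ℝ) (a : Fin 3) (z : PhaseSpace) :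
    HasFDerivAt (qNC α a) (dq α a) z := by
  have h : qNC α a = ⇑(dq α a) := by
    funext w
    simp only [qNC, dq, cQ, cP, ContinuousLinearMap.coe_sub', Pi.sub_apply,
      ContinuousLinearMap.coe_comp', Function.comp_apply, ContinuousLinearMap.coe_fst',
      ContinuousLinearMap.coe_snd', ContinuousLinearMap.proj_apply,
      ContinuousLinearMap.coe_sum', Finset.sum_apply, ContinuousLinearMap.coe_smul',
      Pi.smul_apply, smul_eq_mul, Finset.mul_sum]
    congr 1
    exact Finset.sum_congr rfl fun x _ => by ring
  rw [h]; exact (dq α a).hasFDerivAt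

lemma hasFDerivAt_pNC (lam : Matrix (Fin 3) (Fin 3) ℝ) (a : Fin 3) (z : PhaseSpace) :
    HasFDerivAt (pNC lam a) (dp lam a) z := by
  have h : pNC lam a = ⇑(dp lam a) := by
    funext w
    simp only [pNC, dp, cQ, cP, ContinuousLinearMap.coe_add', Pi.add_apply,
      ContinuousLinearMap.coe_comp', Function.comp_apply, ContinuousLinearMap.coe_fst',
      ContinuousLinearMap.coe_snd', ContinuousLinearMap.proj_apply,
      ContinuousLinearMap.coe_sum', Finset.sum_apply, ContinuousLinearMap.coe_smul',
      Pi.smul_apply, smul_eq_mul, Finset.mul_sum]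
    congr 1
    exact Finset.sum_congr rfl fun x _ => by ring
  rw [h]; exact (dp lam a).hasFDerivAt

lemma hasFDerivAt_Lnc (α lam : Matrix (Fin 3) (Fin 3) ℝ) (i : Fin 3) (z : PhaseSpace) :
    HasFDerivAt (Lnc α lam i)
      (∑ a : Fin 3, ∑ b : Fin 3,
        eps i a b • (qNC α a z • dp lam b + pNC lam b z • dq α a)) z := by
  have h : Lnc α lam i = fun w => ∑ a : Fin 3, ∑ b : Fin 3,
      eps i a b * (qNC α a w * pNC lam b w) := by
    funext w; simp only [Lnc, mul_assoc]
  rw [h]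
  exact HasFDerivAt.fun_sum fun a _ => HasFDerivAt.fun_sum fun b _ =>
    (((hasFDerivAt_qNC α a z).mul (hasFDerivAt_pNC lam b z)).const_mul (eps i a b))

lemma pdQ_Lnc (α lam : Matrix (Fin 3) (Fin 3) ℝ) (i ν : Fin 3) (z : PhaseSpace) :
    pdQ (Lnc α lam i) ν z
      = ∑ a : Fin 3, ∑ b : Fin 3, eps i a b *
          (qNC α a z * ((1/2) * lam b ν) + pNC lam b z * (if a = ν then 1 else 0)) := by
  rw [pdQ, (hasFDerivAt_Lnc α lam i z).fderiv]
  simp only [ContinuousLinearMap.coe_sum', Finset.sum_apply, ContinuousLinearMap.coe_smul',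
    Pi.smul_apply, ContinuousLinearMap.add_apply, dq, dp, cQ, cP,
    ContinuousLinearMap.sub_apply, ContinuousLinearMap.coe_comp', Function.comp_apply,
    ContinuousLinearMap.coe_fst', ContinuousLinearMap.coe_snd',
    ContinuousLinearMap.proj_apply, ContinuousLinearMap.smul_apply, smul_eq_mul,
    Pi.single_apply, mul_ite, mul_one, mul_zero]
  congr 1; funext a; congr 1; funext b
  simp [Finset.sum_ite_eq, mul_comm]

lemma pdP_Lnc (α lam : Matrix (Fin 3) (Fin 3) ℝ) (i ν : Fin 3) (z : PhaseSpace) :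
    pdP (Lnc α lam i) ν z
      = ∑ a : Fin 3, ∑ b : Fin 3, eps i a b *
          (qNC α a z * (if b = ν then 1 else 0) + pNC lam b z * (-((1/2) * α a ν))) := by
  rw [pdP, (hasFDerivAt_Lnc α lam i z).fderiv]
  simp only [ContinuousLinearMap.coe_sum', Finset.sum_apply, ContinuousLinearMap.coe_smul',
    Pi.smul_apply, ContinuousLinearMap.add_apply, dq, dp, cQ, cP,
    ContinuousLinearMap.sub_apply, ContinuousLinearMap.coe_comp', Function.comp_apply,
    ContinuousLinearMap.coe_fst', ContinuousLinearMap.coe_snd',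
    ContinuousLinearMap.proj_apply, ContinuousLinearMap.smul_apply, smul_eq_mul,
    Pi.single_apply, mul_ite, mul_one, mul_zero]
  congr 1; funext a; congr 1; funext b
  simp [Finset.sum_ite_eq, mul_comm]


set_option maxHeartbeats 4000000

/-- Under conditions (C1), (C2), (C3), the angular momentum components satisfy the
`so(3)` commutation relations `{L'_i, L'_j}_nc = Σ_h ε_{ijh} F'_{hh} L'_h`
with `F'_{hh} = −F_{hh}`. -/
theorem stmt5 (α lam : Matrix (Fin 3) (Fin 3) ℝ)
    (hα : ∀ i j, α j i = - α i j) (hlam : ∀ i j, lam j i = - lam i j)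
    (hθ : ∀ ν, θnc α lam ν ≠ 0)
    (h1 : CondC1 α lam) (h3 : CondC3 α lam) :
    ∀ z : PhaseSpace, CondC2 α lam z →
      ∀ i j : Fin 3,
        ncBracket (θnc α lam) (Lnc α lam i) (Lnc α lam j) z
          = ∑ h : Fin 3, eps i j h * (-(Fnc α lam h h)) * Lnc α lam h z := by
  intro z h2 i j
  have hαd : ∀ k, α k k = 0 := fun k => by have := hα k k; linarith
  have hld : ∀ k, lam k k = 0 := fun k => by have := hlam k k; linarith
  have U1l : ∀ i j : Fin 3, lam i j * ((θnc α lam i)⁻¹ + (θnc α lam j)⁻¹) = 0 := by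
    intro i j
    have h := (h1 i j).1
    rw [hlam i j] at h
    linear_combination (θnc α lam i)⁻¹ * (θnc α lam j)⁻¹ * h
      - (lam i j * (θnc α lam j)⁻¹) * (mul_inv_cancel₀ (hθ i))
      - (lam i j * (θnc α lam i)⁻¹) * (mul_inv_cancel₀ (hθ j))
  have U1a : ∀ i j : Fin 3, α i j * ((θnc α lam i)⁻¹ + (θnc α lam j)⁻¹) = 0 := by
    intro i j
    have h := (h1 i j).2
    rw [hα i j] at h
    linear_combination (θnc α lam i)⁻¹ * (θnc α lam j)⁻¹ * h
      - (α i j * (θnc α lam j)⁻¹) * (mul_inv_cancel₀ (hθ i))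
      - (α i j * (θnc α lam i)⁻¹) * (mul_inv_cancel₀ (hθ j))
  have U2a : ∀ i j κ : Fin 3,
      qNC α i z * lam κ j * (θnc α lam j)⁻¹ = qNC α j z * lam κ i * (θnc α lam i)⁻¹ := by
    intro i j κ
    have h := (h2 i j κ).1
    linear_combination (θnc α lam i)⁻¹ * (θnc α lam j)⁻¹ * h
      - (qNC α i z * lam κ j * (θnc α lam j)⁻¹) * (mul_inv_cancel₀ (hθ i))
      + (qNC α j z * lam κ i * (θnc α lam i)⁻¹) * (mul_inv_cancel₀ (hθ j))
  have U2c : ∀ i j κ : Fin 3,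
      pNC lam i z * α κ j * (θnc α lam j)⁻¹ = pNC lam j z * α κ i * (θnc α lam i)⁻¹ := by
    intro i j κ
    have h := (h2 i j κ).2.2.1
    linear_combination (θnc α lam i)⁻¹ * (θnc α lam j)⁻¹ * h
      - (pNC lam i z * α κ j * (θnc α lam j)⁻¹) * (mul_inv_cancel₀ (hθ i))
      + (pNC lam j z * α κ i * (θnc α lam i)⁻¹) * (mul_inv_cancel₀ (hθ j))
  have U3a : lam 0 2 * α 1 2 * (θnc α lam 2)⁻¹ = lam 1 2 * α 0 2 * (θnc α lam 2)⁻¹ := by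
    have e := h3.1 0 1
    rw [Fnc, Fnc, if_neg (by decide), if_neg (by decide), Fin.sum_univ_three,
      Fin.sum_univ_three] at e
    simp only [hαd, hld, hα 0 1, hα 0 2, hα 1 2, hlam 0 1, hlam 0 2, hlam 1 2,
      zero_mul, mul_zero, zero_add, add_zero, neg_mul, mul_neg, neg_zero] at e
    linear_combination 4 * e
  have U3b : lam 1 2 * α 0 1 * (θnc α lam 1)⁻¹ = lam 0 1 * α 1 2 * (θnc α lam 1)⁻¹ := by
    have e := h3.1 0 2
    rw [Fnc, Fnc, if_neg (by decide), if_neg (by decide), Fin.sum_univ_three,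
      Fin.sum_univ_three] at e
    simp only [hαd, hld, hα 0 1, hα 0 2, hα 1 2, hlam 0 1, hlam 0 2, hlam 1 2,
      zero_mul, mul_zero, zero_add, add_zero, neg_mul, mul_neg, neg_zero] at e
    linear_combination 4 * e
  have U3c : lam 0 1 * α 0 2 * (θnc α lam 0)⁻¹ = lam 0 2 * α 0 1 * (θnc α lam 0)⁻¹ := by
    have e := h3.1 1 2
    rw [Fnc, Fnc, if_neg (by decide), if_neg (by decide), Fin.sum_univ_three,
      Fin.sum_univ_three] at e
    simp only [hαd, hld, hα 0 1, hα 0 2, hα 1 2, hlam 0 1, hlam 0 2, hlam 1 2,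
      zero_mul, mul_zero, zero_add, add_zero, neg_mul, mul_neg, neg_zero] at e
    linear_combination 4 * e
  have n01 : ¬ ((0:Fin 3) = 1) := by decide
  have n02 : ¬ ((0:Fin 3) = 2) := by decide
  have n12 : ¬ ((1:Fin 3) = 2) := by decide
  have n10 : ¬ ((1:Fin 3) = 0) := by decide
  have n20 : ¬ ((2:Fin 3) = 0) := by decide
  have n21 : ¬ ((2:Fin 3) = 1) := by decide
  fin_cases i <;> fin_cases j
  · -- i = j = 0
    simp only [ncBracket, pdQ_Lnc, pdP_Lnc, Lnc, Fnc, Fin.sum_univ_three]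
    norm_num [eps]
    ring
  · -- (i,j) = (0,1)
    simp only [ncBracket, pdQ_Lnc, pdP_Lnc]
    simp only [Lnc, Fnc, Fin.sum_univ_three]
    simp only [eps, n01, n02, n12, n10, n20, n21, if_true, if_false, ite_true, ite_false,
      hα 0 1, hα 0 2, hα 1 2, hlam 0 1, hlam 0 2, hlam 1 2, hαd, hld]
    norm_num
    linear_combination ((-1/2 : ℝ) * (qNC α 0 z) * (qNC α 2 z)) * (U1l 1 2) + ((1/2 : ℝ) * (qNC α 1 z) * (qNC α 2 z)) * (U1l 0 2) + ((-1/2 : ℝ) * (qNC α 2 z) * (qNC α 2 z)) * (U1l 0 1) + ((-1/2 : ℝ) * (pNC lam 0 z) * (pNC lam 2 z)) * (U1a 1 2) + ((1/2 : ℝ) * (pNC lam 1 z) * (pNC lam 2 z)) * (U1a 0 2) + ((-1/2 : ℝ) * (pNC lam 2 z) * (pNC lam 2 z)) * (U1a 0 1) + ((-1/4 : ℝ) * (qNC α 2 z) * (pNC lam 2 z) + (-1/4 : ℝ) * (qNC α 1 z) * (pNC lam 1 z) + (-1/4 : ℝ) * (qNC α 0 z) * (pNC lam 0 z)) * U3a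 + ((1/4 : ℝ) * (α 1 2) * (pNC lam 1 z)) * (U2a 1 2 0) + ((-1/4 : ℝ) * (lam 1 2) * (qNC α 1 z)) * (U2c 1 2 0) + ((1/4 : ℝ) * (lam 0 2) * (qNC α 0 z)) * (U2c 0 2 1) + ((-1/4 : ℝ) * (α 0 2) * (pNC lam 0 z)) * (U2a 0 2 1) + ((1/4 : ℝ) * (lam 0 2) * (qNC α 0 z) * (pNC lam 2 z) * ((θnc α lam 0)⁻¹)) * (hα 0 1) + ((-1/4 : ℝ) * (α 0 2) * (qNC α 2 z) * (pNC lam 0 z) * ((θnc α lam 0)⁻¹)) * (hlam 0 1)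
  · -- (i,j) = (0,2)
    simp only [ncBracket, pdQ_Lnc, pdP_Lnc]
    simp only [Lnc, Fnc, Fin.sum_univ_three]
    simp only [eps, n01, n02, n12, n10, n20, n21, if_true, if_false, ite_true, ite_false,
      hα 0 1, hα 0 2, hα 1 2, hlam 0 1, hlam 0 2, hlam 1 2, hαd, hld]
    norm_num
    linear_combination ((-1/2 : ℝ) * (qNC α 0 z) * (qNC α 1 z)) * (U1l 2 1) + ((1/2 : ℝ) * (qNC α 1 z) * (qNC α 2 z)) * (U1l 0 1) + ((-1/2 : ℝ) * (qNC α 1 z) * (qNC α 1 z)) * (U1l 0 2) + ((-1/2 : ℝ) * (pNC lam 0 z) * (pNC lam 1 z)) * (U1a 2 1) + ((1/2 : ℝ) * (pNC lam 1 z) * (pNC lam 2 z)) * (U1a 0 1) + ((-1/2 : ℝ) * (pNC lam 1 z) * (pNC lam 1 z)) * (U1a 0 2) + ((-1/4 : ℝ) * (qNC α 2 z) * (pNC lam 2 z) + (-1/4 : ℝ) * (qNC α 1 z) * (pNC lam 1 z) + (-1/4 : ℝ) * (qNC α 0 z) * (pNC lam 0 z)) * U3b + ((-1/4 : ℝ)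 * (α 1 2) * (pNC lam 2 z)) * (U2a 2 1 0) + ((1/4 : ℝ) * (lam 1 2) * (qNC α 2 z)) * (U2c 2 1 0) + ((1/4 : ℝ) * (lam 0 1) * (qNC α 0 z)) * (U2c 0 1 2) + ((-1/4 : ℝ) * (α 0 1) * (pNC lam 0 z)) * (U2a 0 1 2) + ((1/4 : ℝ) * (lam 0 1) * (qNC α 0 z) * (pNC lam 1 z) * ((θnc α lam 0)⁻¹)) * (hα 0 2) + ((-1/4 : ℝ) * (α 0 1) * (qNC α 1 z) * (pNC lam 0 z) * ((θnc α lam 0)⁻¹)) * (hlam 0 2) + ((1/2 : ℝ) * (pNC lam 0 z) * (pNC lam 1 z) * ((θnc α lam 2)⁻¹) + (1/2 : ℝ) * (pNC lam 0 z) * (pNC lam 1 z) * ((θnc α lam 1)⁻¹) + (-1/4 : ℝ) * (lam 0 1) * (qNC α 0 z) * (pNC lam 0 z) * ((θnc α lam 1)⁻¹)) * (hα 1 2) + ((1/2 : ℝ) * (qNC α 0 z) * (qNC α 1 z) * ((θnc α lam 2)⁻¹) + (1/2 : ℝ) * (qNC α 0 z) * (qNC α 1 z) * ((θnc α lam 1)⁻¹)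 + (1/4 : ℝ) * (α 0 1) * (qNC α 0 z) * (pNC lam 0 z) * ((θnc α lam 1)⁻¹)) * (hlam 1 2)
  · -- (i,j) = (1,0)
    simp only [ncBracket, pdQ_Lnc, pdP_Lnc]
    simp only [Lnc, Fnc, Fin.sum_univ_three]
    simp only [eps, n01, n02, n12, n10, n20, n21, if_true, if_false, ite_true, ite_false,
      hα 0 1, hα 0 2, hα 1 2, hlam 0 1, hlam 0 2, hlam 1 2, hαd, hld]
    norm_num
    linear_combination ((-1/2 : ℝ) * (qNC α 1 z) * (qNC α 2 z)) * (U1l 0 2) + ((1/2 : ℝ) * (qNC α 0 z) * (qNC α 2 z)) * (U1l 1 2) + ((-1/2 : ℝ) * (qNC α 2 z) * (qNC α 2 z)) * (U1l 1 0) + ((-1/2 : ℝ) * (pNC lam 1 z) * (pNC lam 2 z)) * (U1a 0 2) + ((1/2 : ℝ) * (pNC lam 0 z) * (pNC lam 2 z)) * (U1a 1 2) + ((-1/2 : ℝ) * (pNC lam 2 z) * (pNC lam 2 z)) * (U1a 1 0) + ((1/4 : ℝ) * (qNC α 2 z) * (pNC lam 2 z) + (1/4 : ℝ) * (qNC α 1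 z) * (pNC lam 1 z) + (1/4 : ℝ) * (qNC α 0 z) * (pNC lam 0 z)) * U3a + ((1/4 : ℝ) * (α 0 2) * (pNC lam 0 z)) * (U2a 0 2 1) + ((-1/4 : ℝ) * (lam 0 2) * (qNC α 0 z)) * (U2c 0 2 1) + ((1/4 : ℝ) * (lam 1 2) * (qNC α 1 z)) * (U2c 1 2 0) + ((-1/4 : ℝ) * (α 1 2) * (pNC lam 1 z)) * (U2a 1 2 0) + ((1/2 : ℝ) * (pNC lam 2 z) * (pNC lam 2 z) * ((θnc α lam 1)⁻¹) + (1/2 : ℝ) * (pNC lam 2 z) * (pNC lam 2 z) * ((θnc α lam 0)⁻¹) + (-1/4 : ℝ) * (lam 0 2) * (qNC α 0 z) * (pNC lam 2 z) * ((θnc α lam 0)⁻¹)) * (hα 0 1) + ((1/2 : ℝ) * (qNC α 2 z) * (qNC α 2 z) * ((θnc α lam 1)⁻¹) + (1/2 : ℝ) * (qNC α 2 z) * (qNC α 2 z) * ((θnc α lam 0)⁻¹) + (1/4 : ℝ) * (α 0 2) * (qNC α 2 z) * (pNC lam 0 z) * ((θnc α lam 0)⁻¹)) * (hlam 0 1)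
  · -- i = j = 1
    simp only [ncBracket, pdQ_Lnc, pdP_Lnc, Lnc, Fnc, Fin.sum_univ_three]
    norm_num [eps]
    ring
  · -- (i,j) = (1,2)
    simp only [ncBracket, pdQ_Lnc, pdP_Lnc]
    simp only [Lnc, Fnc, Fin.sum_univ_three]
    simp only [eps, n01, n02, n12, n10, n20, n21, if_true, if_false, ite_true, ite_false,
      hα 0 1, hα 0 2, hα 1 2, hlam 0 1, hlam 0 2, hlam 1 2, hαd, hld]
    norm_num
    linear_combination ((-1/2 : ℝ) * (qNC α 0 z) * (qNC α 1 z)) * (U1l 2 0) + ((1/2 : ℝ) * (qNC α 0 z) * (qNC α 2 z)) * (U1l 1 0) + ((-1/2 : ℝ) * (qNC α 0 z) * (qNC α 0 z)) * (U1l 1 2) + ((-1/2 : ℝ) * (pNC lam 0 z) * (pNC lam 1 z)) * (U1a 2 0) + ((1/2 : ℝ) * (pNC lam 0 z) * (pNC lam 2 z)) * (U1a 1 0) + ((-1/2 : ℝ) * (pNC lam 0 z) * (pNC lam 0 z)) * (U1a 1 2) + ((-1/4 : ℝ) * (qNC α 2 z) * (pNC lam 2 z) + (-1/4 : ℝ)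 * (qNC α 1 z) * (pNC lam 1 z) + (-1/4 : ℝ) * (qNC α 0 z) * (pNC lam 0 z)) * U3c + ((-1/4 : ℝ) * (α 0 2) * (pNC lam 2 z)) * (U2a 2 0 1) + ((1/4 : ℝ) * (lam 0 2) * (qNC α 2 z)) * (U2c 2 0 1) + ((-1/4 : ℝ) * (lam 0 1) * (qNC α 1 z)) * (U2c 1 0 2) + ((1/4 : ℝ) * (α 0 1) * (pNC lam 1 z)) * (U2a 1 0 2) + ((-1/2 : ℝ) * (pNC lam 0 z) * (pNC lam 2 z) * ((θnc α lam 1)⁻¹) + (-1/2 : ℝ) * (pNC lam 0 z) * (pNC lam 2 z) * ((θnc α lam 0)⁻¹) + (-1/4 : ℝ) * (lam 0 2) * (qNC α 2 z) * (pNC lam 2 z) * ((θnc α lam 0)⁻¹)) * (hα 0 1) + ((-1/2 : ℝ) * (qNC α 0 z) * (qNC α 2 z) * ((θnc α lam 1)⁻¹) + (-1/2 : ℝ) * (qNC α 0 z) * (qNC α 2 z) * ((θnc α lam 0)⁻¹) + (1/4 : ℝ) * (α 0 2) * (qNC α 2 z) * (pNC lam 2 z) * ((θnc α lam 0)⁻¹))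 * (hlam 0 1) + ((1/2 : ℝ) * (pNC lam 0 z) * (pNC lam 1 z) * ((θnc α lam 2)⁻¹) + (1/2 : ℝ) * (pNC lam 0 z) * (pNC lam 1 z) * ((θnc α lam 0)⁻¹) + (1/4 : ℝ) * (lam 0 1) * (qNC α 1 z) * (pNC lam 1 z) * ((θnc α lam 0)⁻¹)) * (hα 0 2) + ((1/2 : ℝ) * (qNC α 0 z) * (qNC α 1 z) * ((θnc α lam 2)⁻¹) + (1/2 : ℝ) * (qNC α 0 z) * (qNC α 1 z) * ((θnc α lam 0)⁻¹) + (-1/4 : ℝ) * (α 0 1) * (qNC α 1 z) * (pNC lam 1 z) * ((θnc α lam 0)⁻¹)) * (hlam 0 2) + ((-1/4 : ℝ) * (lam 0 1) * (qNC α 1 z) * (pNC lam 0 z) * ((θnc α lam 1)⁻¹)) * (hα 1 2) + ((1/4 : ℝ) * (α 0 1) * (qNC α 0 z) * (pNC lam 1 z) * ((θnc α lam 1)⁻¹)) * (hlam 1 2)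
  · -- (i,j) = (2,0)
    simp only [ncBracket, pdQ_Lnc, pdP_Lnc]
    simp only [Lnc, Fnc, Fin.sum_univ_three]
    simp only [eps, n01, n02, n12, n10, n20, n21, if_true, if_false, ite_true, ite_false,
      hα 0 1, hα 0 2, hα 1 2, hlam 0 1, hlam 0 2, hlam 1 2, hαd, hld]
    norm_num
    linear_combination ((-1/2 : ℝ) * (qNC α 1 z) * (qNC α 2 z)) * (U1l 0 1) + ((1/2 : ℝ) * (qNC α 0 z) * (qNC α 1 z)) * (U1l 2 1) + ((-1/2 : ℝ) * (qNC α 1 z) * (qNC α 1 z)) * (U1l 2 0) + ((-1/2 : ℝ) * (pNC lam 1 z) * (pNC lam 2 z)) * (U1a 0 1) + ((1/2 : ℝ) * (pNC lam 0 z) * (pNC lam 1 z)) * (U1a 2 1) + ((-1/2 : ℝ) * (pNC lam 1 z) * (pNC lam 1 z)) * (U1a 2 0) + ((1/4 : ℝ) * (qNC α 2 z) * (pNC lam 2 z) + (1/4 : ℝ) * (qNC α 1 z) * (pNC lam 1 z) + (1/4 : ℝ) * (qNC α 0 z) * (pNC lam 0 z)) * U3b + ((1/4 : ℝ) * (α 0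 1) * (pNC lam 0 z)) * (U2a 0 1 2) + ((-1/4 : ℝ) * (lam 0 1) * (qNC α 0 z)) * (U2c 0 1 2) + ((-1/4 : ℝ) * (lam 1 2) * (qNC α 2 z)) * (U2c 2 1 0) + ((1/4 : ℝ) * (α 1 2) * (pNC lam 2 z)) * (U2a 2 1 0) + ((1/2 : ℝ) * (pNC lam 1 z) * (pNC lam 1 z) * ((θnc α lam 2)⁻¹) + (1/2 : ℝ) * (pNC lam 1 z) * (pNC lam 1 z) * ((θnc α lam 0)⁻¹) + (-1/4 : ℝ) * (lam 0 1) * (qNC α 0 z) * (pNC lam 1 z) * ((θnc α lam 0)⁻¹)) * (hα 0 2) + ((1/2 : ℝ) * (qNC α 1 z) * (qNC α 1 z) * ((θnc α lam 2)⁻¹) + (1/2 : ℝ) * (qNC α 1 z) * (qNC α 1 z) * ((θnc α lam 0)⁻¹) + (1/4 : ℝ) * (α 0 1) * (qNC α 1 z) * (pNC lam 0 z) * ((θnc α lam 0)⁻¹)) * (hlam 0 2) + ((-1/2 : ℝ) * (pNC lam 0 z) * (pNC lam 1 z) * ((θnc α lam 2)⁻¹) + (-1/2 : ℝ) * (pNC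 lam 0 z) * (pNC lam 1 z) * ((θnc α lam 1)⁻¹) + (1/4 : ℝ) * (lam 0 1) * (qNC α 0 z) * (pNC lam 0 z) * ((θnc α lam 1)⁻¹)) * (hα 1 2) + ((-1/2 : ℝ) * (qNC α 0 z) * (qNC α 1 z) * ((θnc α lam 2)⁻¹) + (-1/2 : ℝ) * (qNC α 0 z) * (qNC α 1 z) * ((θnc α lam 1)⁻¹) + (-1/4 : ℝ) * (α 0 1) * (qNC α 0 z) * (pNC lam 0 z) * ((θnc α lam 1)⁻¹)) * (hlam 1 2)
  · -- (i,j) = (2,1)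
    simp only [ncBracket, pdQ_Lnc, pdP_Lnc]
    simp only [Lnc, Fnc, Fin.sum_univ_three]
    simp only [eps, n01, n02, n12, n10, n20, n21, if_true, if_false, ite_true, ite_false,
      hα 0 1, hα 0 2, hα 1 2, hlam 0 1, hlam 0 2, hlam 1 2, hαd, hld]
    norm_num
    linear_combination ((-1/2 : ℝ) * (qNC α 0 z) * (qNC α 2 z)) * (U1l 1 0) + ((1/2 : ℝ) * (qNC α 0 z) * (qNC α 1 z)) * (U1l 2 0) + ((-1/2 : ℝ) * (qNC α 0 z) * (qNC α 0 z)) * (U1l 2 1) + ((-1/2 : ℝ) * (pNC lam 0 z) * (pNC lam 2 z)) * (U1a 1 0) + ((1/2 : ℝ) * (pNC lam 0 z) * (pNC lam 1 z)) * (U1a 2 0) + ((-1/2 : ℝ) * (pNC lam 0 z) * (pNC lam 0 z)) * (U1a 2 1) + ((1/4 : ℝ) * (qNC α 2 z) * (pNC lam 2 z) + (1/4 : ℝ) * (qNC α 1 z) * (pNC lam 1 z) + (1/4 : ℝ) * (qNC α 0 z) * (pNC lam 0 z)) * U3c + ((-1/4 : ℝ) * (α 0 1) * (pNC lam 1 z))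 * (U2a 1 0 2) + ((1/4 : ℝ) * (lam 0 1) * (qNC α 1 z)) * (U2c 1 0 2) + ((-1/4 : ℝ) * (lam 0 2) * (qNC α 2 z)) * (U2c 2 0 1) + ((1/4 : ℝ) * (α 0 2) * (pNC lam 2 z)) * (U2a 2 0 1) + ((1/2 : ℝ) * (pNC lam 0 z) * (pNC lam 2 z) * ((θnc α lam 1)⁻¹) + (1/2 : ℝ) * (pNC lam 0 z) * (pNC lam 2 z) * ((θnc α lam 0)⁻¹) + (1/4 : ℝ) * (lam 0 2) * (qNC α 2 z) * (pNC lam 2 z) * ((θnc α lam 0)⁻¹)) * (hα 0 1) + ((1/2 : ℝ) * (qNC α 0 z) * (qNC α 2 z) * ((θnc α lam 1)⁻¹) + (1/2 : ℝ) * (qNC α 0 z) * (qNC α 2 z) * ((θnc α lam 0)⁻¹) + (-1/4 : ℝ) * (α 0 2) * (qNC α 2 z) * (pNC lam 2 z) * ((θnc α lam 0)⁻¹)) * (hlam 0 1) + ((-1/2 : ℝ) * (pNC lam 0 z) * (pNC lam 1 z) * ((θnc α lam 2)⁻¹) + (-1/2 : ℝ) * (pNC lam 0 z) * (pNC lam 1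 z) * ((θnc α lam 0)⁻¹) + (-1/4 : ℝ) * (lam 0 1) * (qNC α 1 z) * (pNC lam 1 z) * ((θnc α lam 0)⁻¹)) * (hα 0 2) + ((-1/2 : ℝ) * (qNC α 0 z) * (qNC α 1 z) * ((θnc α lam 2)⁻¹) + (-1/2 : ℝ) * (qNC α 0 z) * (qNC α 1 z) * ((θnc α lam 0)⁻¹) + (1/4 : ℝ) * (α 0 1) * (qNC α 1 z) * (pNC lam 1 z) * ((θnc α lam 0)⁻¹)) * (hlam 0 2) + ((1/2 : ℝ) * (pNC lam 0 z) * (pNC lam 0 z) * ((θnc α lam 2)⁻¹) + (1/2 : ℝ) * (pNC lam 0 z) * (pNC lam 0 z) * ((θnc α lam 1)⁻¹) + (1/4 : ℝ) * (lam 0 1) * (qNC α 1 z) * (pNC lam 0 z) * ((θnc α lam 1)⁻¹)) * (hα 1 2) + ((1/2 : ℝ) * (qNC α 0 z) * (qNC α 0 z) * ((θnc α lam 2)⁻¹) + (1/2 : ℝ) * (qNC α 0 z) * (qNC α 0 z) * ((θnc α lam 1)⁻¹) + (-1/4 : ℝ) * (α 0 1) * (qNC α 0 z) * (pNC lam 1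 z) * ((θnc α lam 1)⁻¹)) * (hlam 1 2)
  · -- i = j = 2
    simp only [ncBracket, pdQ_Lnc, pdP_Lnc, Lnc, Fnc, Fin.sum_univ_three]
    norm_num [eps]
    ring
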